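/- The degree-three rational function w given by w = 6cpq·D²/E + 3c, where D = pq+2c(mp+nq) and E = −3pq((pq)² − 2cpq(mp+nq) − 4c²(mp+nq)²) + 8c³(3nm·pq(mp+nq) + (n³−n)q³ + (m³−m)p³), satisfies the lattice potential KdV equation (p−q+ŵ−w̃)(p+q+w−ŵ̃) = p²−q² at all lattice points where E and its shifts are nonzero. -/
import Mathlib


private lemma key1 (x t a b e2 e3 : ℝ) (h2 : e2 ≠ 0) (h3 : e3 ≠ 0) :
    (x + (a / e3 + t) - (b / e2 + t)) * (e2 * e3) = x * (e2 * e3) + a * e2 - b * e3 := by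
  field_simp; ring

private lemma key2 (x t a b e2 e3 : ℝ) (h2 : e2 ≠ 0) (h3 : e3 ≠ 0) :
    (x + (a / e3 + t) - (b / e2 + t)) * (e3 * e2) = x * (e3 * e2) + a * e2 - b * e3 := by
  field_simp; ring

set_option maxHeartbeats 1000000 in
/-- The N=3 rational solution `w = 6cpq·D²/E + 3c` satisfies the lattice
potential KdV equation `(p−q+ŵ−w̃)(p+q+w−ŵ̃) = p²−q²`. -/
theorem stmt_9 (p q c : ℝ) (hp : p ≠ 0) (hq : q ≠ 0) (hc : c ≠ 0)
    (D E w : ℤ → ℤ → ℝ)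
    (hD : ∀ n m : ℤ, D n m = p*q + 2*c*((m : ℝ)*p + (n : ℝ)*q))
    (hE : ∀ n m : ℤ, E n m =
      -(3*p*q*((p*q)^2 - 2*c*p*q*((m : ℝ)*p + (n : ℝ)*q)
        - 4*c^2*((m : ℝ)*p + (n : ℝ)*q)^2))
      + 8*c^3*(3*(n : ℝ)*(m : ℝ)*p*q*((m : ℝ)*p + (n : ℝ)*q)
        + ((n : ℝ)^3 - (n : ℝ))*q^3 + ((m : ℝ)^3 - (m : ℝ))*p^3))
    (hw : ∀ n m : ℤ, w n m = 6*c*p*q*(D n m)^2 / E n m + 3*c)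
    (n m : ℤ)
    (h1 : E n m ≠ 0) (h2 : E (n+1) m ≠ 0) (h3 : E n (m+1) ≠ 0) (h4 : E (n+1) (m+1) ≠ 0) :
    (p - q + w n (m+1) - w (n+1) m) * (p + q + w n m - w (n+1) (m+1)) = p^2 - q^2 := by
  have h23 : E (n+1) m * E n (m+1) ≠ 0 := mul_ne_zero h2 h3
  have h14 : E n m * E (n+1) (m+1) ≠ 0 := mul_ne_zero h1 h4
  have k1 : (p - q + w n (m+1) - w (n+1) m) * (E (n+1) m * E n (m+1))
      = (p - q) * (E n m * E (n+1) (m+1)) := by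
    rw [hw n (m+1), hw (n+1) m, key1 _ _ _ _ _ _ h2 h3,
        hD n (m+1), hD (n+1) m,
        hE n m, hE (n+1) m, hE n (m+1), hE (n+1) (m+1)]
    push_cast
    ring
  have k2 : (p + q + w n m - w (n+1) (m+1)) * (E n m * E (n+1) (m+1))
      = (p + q) * (E (n+1) m * E n (m+1)) := by
    rw [hw n m, hw (n+1) (m+1), key2 _ _ _ _ _ _ h4 h1,
        hD n m, hD (n+1) (m+1),
        hE n m, hE (n+1) m, hE n (m+1), hE (n+1) (m+1)]
    push_cast
    ring
  have f1 : p - q + w n (m+1) - w (n+1) m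
      = (p - q) * (E n m * E (n+1) (m+1)) / (E (n+1) m * E n (m+1)) := by
    rw [eq_div_iff h23]; exact k1
  have f2 : p + q + w n m - w (n+1) (m+1)
      = (p + q) * (E (n+1) m * E n (m+1)) / (E n m * E (n+1) (m+1)) := by
    rw [eq_div_iff h14]; exact k2
  rw [f1, f2]
  field_simp
  ring
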